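/- Let d ≥ 3. In the silo graph G_d, for any i, i' ∈ [d] there is a walk in the 'layered' auxiliary graph Γ (vertices (i,j) ∈ [d] × [rd], with edges from (i,j) to (i,j+1) always, and from (j mod d, j) to (i, j+1) whenever i ≢ j+1 mod d) from (i,1) to (i',j) of length exactly j-1, provided j ≥ d+3. -/

import Mathlib

/-- The representative in `{1,…,d}` of `z` modulo `d`. -/
def modRep (d z : ℕ) : ℕ := if z % d = 0 then d else z % d

/-- One directed step of the layered auxiliary graph `Γ`: from `(i,j)` to
`(i,j+1)` always, and from `(modRep d j, j)` to `(i', j+1)` whenever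
`i' ≠ modRep d (j+1)`. -/
def gammaStep (d : ℕ) (p q : ℕ × ℕ) : Prop :=
  q.2 = p.2 + 1 ∧
    (q.1 = p.1 ∨ (p.1 = modRep d p.2 ∧ q.1 ≠ modRep d (p.2 + 1)))

/-- Valid vertices of `Γ`: pairs in `[d] × [rd]`. -/
def gammaValid (d r : ℕ) (p : ℕ × ℕ) : Prop :=
  1 ≤ p.1 ∧ p.1 ≤ d ∧ 1 ≤ p.2 ∧ p.2 ≤ r * d

/-- The layered auxiliary graph `Γ`. -/
def gammaGraph (d r : ℕ) : SimpleGraph (ℕ × ℕ) where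
  Adj p q := gammaValid d r p ∧ gammaValid d r q ∧
    (gammaStep d p q ∨ gammaStep d q p)
  symm := ⟨fun p q h => ⟨h.2.1, h.1, h.2.2.symm⟩⟩
  loopless := ⟨by rintro p ⟨_, _, ⟨h, _⟩ | ⟨h, _⟩⟩ <;> omega⟩

lemma modRep_mod (d z : ℕ) (hd : 1 ≤ d) : modRep d z % d = z % d := by
  unfold modRep
  split
  · simp [Nat.mod_self]; omega
  · exact Nat.mod_mod_of_dvd _ dvd_rfl

lemma modRep_bounds (d z : ℕ) (hd : 1 ≤ d) : 1 ≤ modRep d z ∧ modRep d z ≤ d := by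
  unfold modRep
  split
  · omega
  · have := Nat.mod_lt z hd
    omega

lemma modRep_ne (d a b : ℕ) (hd : 1 ≤ d) (h : a % d ≠ b % d) :
    modRep d a ≠ modRep d b := by
  intro he
  apply h
  rw [← modRep_mod d a hd, ← modRep_mod d b hd, he]

lemma modRep_eq_self (d i : ℕ) (h1 : 1 ≤ i) (h2 : i ≤ d) : modRep d i = i := by
  unfold modRep
  rcases Nat.lt_or_ge i d with h | h
  · rw [Nat.mod_eq_of_lt h, if_neg (by omega)]
  · have : i = d := by omega
    subst this
    simp [Nat.mod_self]

lemma mod_succ_ne (d a k : ℕ) (hk1 : 1 ≤ k) (hkd : k < d) : a % d ≠ (a + k) % d := by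
  intro h
  have h' : a ≡ a + k [MOD d] := h
  have := (Nat.modEq_iff_dvd' (by omega)).mp h'
  simp only [Nat.add_sub_cancel_left] at this
  have := Nat.le_of_dvd (by omega) this
  omega

lemma walk_of_fun (d r : ℕ) (f : ℕ → ℕ) :
    ∀ b a, a ≤ b → (∀ t, a ≤ t → t < b → (gammaGraph d r).Adj (f t, t) (f (t+1), t+1)) →
    ∃ p : (gammaGraph d r).Walk (f a, a) (f b, b), p.length = b - a := by
  intro b
  induction b with
  | zero =>
    intro a ha _
    obtain rfl := Nat.le_zero.mp ha
    exact ⟨.nil, rfl⟩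
  | succ b ih =>
    intro a ha h
    rcases Nat.lt_or_ge a (b+1) with h' | h'
    · obtain ⟨p, hp⟩ := ih a (by omega) (fun t ht1 ht2 => h t ht1 (by omega))
      refine ⟨p.concat (h b (by omega) (by omega)), ?_⟩
      rw [SimpleGraph.Walk.length_concat, hp]
      omega
    · have : a = b + 1 := by omega
      subst this
      exact ⟨.nil, by simp⟩

/-- for `d ≥ 3`, in the auxiliary graph `Γ` there is a walk from
`(i,1)` to `(i',j)` of length exactly `j - 1`, provided `d + 3 ≤ j ≤ rd`. -/
theorem gamma_walk (d r : ℕ) (hd : 3 ≤ d) (i i' : ℕ)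
    (hi : 1 ≤ i ∧ i ≤ d) (hi' : 1 ≤ i' ∧ i' ≤ d)
    (j : ℕ) (hj1 : d + 3 ≤ j) (hj2 : j ≤ r * d) :
    ∃ p : (gammaGraph d r).Walk (i, 1) (i', j), p.length = j - 1 := by
  have hd1 : 1 ≤ d := by omega
  obtain ⟨hi1, hi2⟩ := hi
  obtain ⟨hi'1, hi'2⟩ := hi'
  by_cases hA : i' = modRep d (i + 1)
  · -- need an intermediate column c = modRep d (i+2)
    set c := modRep d (i + 2) with hc
    have hcb := modRep_bounds d (i + 2) hd1
    set f : ℕ → ℕ := fun t => if t ≤ i then i else if t ≤ i + 2 then c else i' with hf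
    have hadj : ∀ t, 1 ≤ t → t < j → (gammaGraph d r).Adj (f t, t) (f (t+1), t+1) := by
      intro t ht1 ht2
      have hv : gammaValid d r (f t, t) ∧ gammaValid d r (f (t+1), t+1) := by
        constructor <;>
        · refine ⟨?_, ?_, by omega, by omega⟩ <;>
          · simp only [hf]
            split <;> [skip; split] <;> omega
      refine ⟨hv.1, hv.2, Or.inl ⟨rfl, ?_⟩⟩
      rcases Nat.lt_or_ge t i with h | h
      · left; simp only [hf, if_pos (by omega : t ≤ i), if_pos (by omega : t + 1 ≤ i)]
      rcases Nat.lt_or_ge t (i + 2) with h2 | h2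
      · rcases Nat.eq_or_lt_of_le h with h3 | h3
        · -- t = i : jump from i to c
          right
          have ht : t = i := h3.symm
          subst ht
          constructor
          · simp only [hf, if_pos (le_refl t)]
            exact (modRep_eq_self d t hi1 hi2).symm
          · simp only [hf, if_neg (by omega : ¬ t + 1 ≤ t), if_pos (by omega : t + 1 ≤ t + 2)]
            exact (modRep_ne d (t + 1) (t + 1 + 1) hd1
              (mod_succ_ne d (t + 1) 1 (by omega) (by omega))).symm
        · -- t = i+1 : stay at c
          left
          simp only [hf, if_neg (by omega : ¬ t ≤ i), if_neg (by omega : ¬ t + 1 ≤ i),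
            if_pos (by omega : t ≤ i + 2), if_pos (by omega : t + 1 ≤ i + 2)]
      rcases Nat.eq_or_lt_of_le h2 with h3 | h3
      · -- t = i+2 : jump from c to i'
        right
        constructor
        · simp only [hf, if_neg (by omega : ¬ t ≤ i), if_pos (by omega : t ≤ i + 2)]
          rw [hc, ← h3]
        · simp only [hf, if_neg (by omega : ¬ t + 1 ≤ i), if_neg (by omega : ¬ t + 1 ≤ i + 2)]
          rw [hA, ← h3]
          exact modRep_ne d (i + 1) (i + 3) hd1 (mod_succ_ne d (i + 1) 2 (by omega) (by omega))
      · -- t > i+2 : stay at i'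
        left
        simp only [hf, if_neg (by omega : ¬ t ≤ i), if_neg (by omega : ¬ t + 1 ≤ i),
          if_neg (by omega : ¬ t ≤ i + 2), if_neg (by omega : ¬ t + 1 ≤ i + 2)]
    obtain ⟨p, hp⟩ := walk_of_fun d r f j 1 (by omega) hadj
    have h1 : f 1 = i := by simp only [hf, if_pos hi1]
    have h2 : f j = i' := by
      simp only [hf, if_neg (by omega : ¬ j ≤ i), if_neg (by omega : ¬ j ≤ i + 2)]
    exact ⟨p.copy (by rw [h1]) (by rw [h2]), by rw [SimpleGraph.Walk.length_copy, hp]⟩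
  · -- single jump from i to i' at layer i
    set f : ℕ → ℕ := fun t => if t ≤ i then i else i' with hf
    have hadj : ∀ t, 1 ≤ t → t < j → (gammaGraph d r).Adj (f t, t) (f (t+1), t+1) := by
      intro t ht1 ht2
      have hv : gammaValid d r (f t, t) ∧ gammaValid d r (f (t+1), t+1) := by
        constructor <;>
        · refine ⟨?_, ?_, by omega, by omega⟩ <;>
          · simp only [hf]; split <;> omega
      refine ⟨hv.1, hv.2, Or.inl ⟨rfl, ?_⟩⟩
      rcases Nat.lt_or_ge t i with h | h
      · left; simp only [hf, if_pos (by omega : t ≤ i), if_pos (by omega : t + 1 ≤ i)]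
      rcases Nat.eq_or_lt_of_le h with h3 | h3
      · right
        have ht : t = i := h3.symm
        subst ht
        constructor
        · simp only [hf, if_pos (le_refl t)]
          exact (modRep_eq_self d t hi1 hi2).symm
        · simp only [hf, if_neg (by omega : ¬ t + 1 ≤ t)]
          exact fun he => hA he
      · left
        simp only [hf, if_neg (by omega : ¬ t ≤ i), if_neg (by omega : ¬ t + 1 ≤ i)]
    obtain ⟨p, hp⟩ := walk_of_fun d r f j 1 (by omega) hadj
    have h1 : f 1 = i := by simp only [hf, if_pos hi1]
    have h2 : f j = i' := by simp only [hf, if_neg (by omega : ¬ j ≤ i)]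
    exact ⟨p.copy (by rw [h1]) (by rw [h2]), by rw [SimpleGraph.Walk.length_copy, hp]⟩
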